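/- Every maximum subnetwork of a binary tree-child phylogenetic network is tree-child; that is, deleting a single reticulation edge from a tree-child network and cleaning up yields a tree-child network. -/

import Mathlib

open scoped Classical
noncomputable section

/-- A (rooted binary phylogenetic) network datum: a finite directed graph on `ℕ`
with an optional leaf-labelling by `α`. -/
structure Net (α : Type) where
  verts : Finset ℕ
  edges : Finset (ℕ × ℕ)
  lab : ℕ → Option α

namespace Net

variable {α β : Type}

def Edge (N : Net α) (u v : ℕ) : Prop := (u, v) ∈ N.edges

def indeg (N : Net α) (v : ℕ) : ℕ := (N.edges.filter fun e => e.2 = v).card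
def outdeg (N : Net α) (v : ℕ) : ℕ := (N.edges.filter fun e => e.1 = v).card

/-- Reachability by directed paths. -/
def Reaches (N : Net α) : ℕ → ℕ → Prop := Relation.ReflTransGen N.Edge

def IsRoot (N : Net α) (v : ℕ) : Prop :=
  v ∈ N.verts ∧ N.indeg v = 0 ∧ N.outdeg v = 1
def IsLeaf (N : Net α) (v : ℕ) : Prop :=
  v ∈ N.verts ∧ N.indeg v = 1 ∧ N.outdeg v = 0
def IsTreeNode (N : Net α) (v : ℕ) : Prop :=
  v ∈ N.verts ∧ N.indeg v = 1 ∧ N.outdeg v = 2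
def IsRetic (N : Net α) (v : ℕ) : Prop :=
  v ∈ N.verts ∧ N.indeg v = 2 ∧ N.outdeg v = 1

/-- `N` is a rooted binary phylogenetic network on leaf set `α`. -/
def IsNetwork (N : Net α) : Prop :=
  (∀ e ∈ N.edges, e.1 ∈ N.verts ∧ e.2 ∈ N.verts) ∧
  (∀ u v, N.Edge u v → ¬ N.Reaches v u) ∧
  (∃! r, N.IsRoot r) ∧
  (∀ v ∈ N.verts, N.IsRoot v ∨ N.IsLeaf v ∨ N.IsTreeNode v ∨ N.IsRetic v) ∧
  (∀ v, (∃ x, N.lab v = some x) ↔ N.IsLeaf v) ∧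
  (∀ x : α, ∃! v, N.lab v = some x)

/-- Tree-child: every non-leaf node has a child that is a tree node or a leaf. -/
def TreeChild (N : Net α) : Prop :=
  N.IsNetwork ∧
  ∀ v ∈ N.verts, ¬ N.IsLeaf v → ∃ c, N.Edge v c ∧ (N.IsTreeNode c ∨ N.IsLeaf c)

def IsReticEdge (N : Net α) (e : ℕ × ℕ) : Prop := e ∈ N.edges ∧ N.IsRetic e.2

def deleteNode (N : Net α) (v : ℕ) : Net α :=
  ⟨N.verts.erase v, N.edges.filter fun e => e.1 ≠ v ∧ e.2 ≠ v, N.lab⟩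

def deleteEdge (N : Net α) (e : ℕ × ℕ) : Net α := ⟨N.verts, N.edges.erase e, N.lab⟩

def deleteEdges (N : Net α) (E : Finset (ℕ × ℕ)) : Net α := ⟨N.verts, N.edges \ E, N.lab⟩

/-- One step of cleaning up: delete an unlabelled outdegree-0 node, or suppress an
indegree-1 outdegree-1 node.  (In this simple-digraph encoding the parallel-edge rule
is subsumed: the inserted edge merges with an existing one, and the endpoints are then
suppressed by further steps.) -/
inductive CleanStep {α : Type} : Net α → Net α → Prop
  | delNode (N : Net α) (v : ℕ) (hv : v ∈ N.verts) (h0 : N.outdeg v = 0)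
      (hlab : N.lab v = none) : CleanStep N (N.deleteNode v)
  | suppress (N : Net α) (u v w : ℕ) (h1 : N.indeg v = 1) (h2 : N.outdeg v = 1)
      (hu : N.Edge u v) (hw : N.Edge v w) :
      CleanStep N ⟨N.verts.erase v,
        insert (u, w) (N.edges.filter fun e => e.1 ≠ v ∧ e.2 ≠ v), N.lab⟩

/-- `N` cleans up to `M`: apply clean-up steps until none applies. -/
def CleansTo (N M : Net α) : Prop :=
  Relation.ReflTransGen CleanStep N M ∧ ∀ M', ¬ CleanStep M M'

/-- Maximum subnetwork: delete one reticulation edge and clean up. -/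
def IsMaxSubnet (N M : Net α) : Prop :=
  ∃ e, N.IsReticEdge e ∧ CleansTo (N.deleteEdge e) M

/-- A reticulation edge is valid if deleting it and cleaning up removes exactly
2 nodes and 3 edges. -/
def ValidEdge (N : Net α) (e : ℕ × ℕ) : Prop :=
  N.IsReticEdge e ∧
  ∀ M, CleansTo (N.deleteEdge e) M →
    M.verts.card + 2 = N.verts.card ∧ M.edges.card + 3 = N.edges.card

/-- A valid network: all reticulation edges are valid. -/
def Valid (N : Net α) : Prop :=
  N.IsNetwork ∧ ∀ e, N.IsReticEdge e → N.ValidEdge e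

def Subgraph (M N : Net α) : Prop :=
  M.verts ⊆ N.verts ∧ M.edges ⊆ N.edges ∧ ∀ v ∈ M.verts, M.lab v = N.lab v

/-- One edge-subdivision step. -/
inductive SubdivStep {α : Type} : Net α → Net α → Prop
  | mk (N : Net α) (u v w : ℕ) (he : N.Edge u v) (hw : w ∉ N.verts) :
      SubdivStep N ⟨insert w N.verts,
        insert (u, w) (insert (w, v) (N.edges.erase (u, v))), N.lab⟩

/-- `M` is a subdivision of `N`. -/
def Subdivision (N M : Net α) : Prop := Relation.ReflTransGen SubdivStep N M

/-- Isomorphism of networks (preserving leaf labels). -/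
def Iso (N M : Net α) : Prop :=
  ∃ f : ℕ → ℕ, Set.BijOn f ↑N.verts ↑M.verts ∧
    (∀ u ∈ N.verts, ∀ v ∈ N.verts, (N.Edge u v ↔ M.Edge (f u) (f v))) ∧
    ∀ v ∈ N.verts, N.lab v = M.lab (f v)

/-- `N` displays `M`: some subgraph of `N` is (isomorphic to) a subdivision of `M`. -/
def Displays (N M : Net α) : Prop :=
  ∃ S M', Subgraph S N ∧ Subdivision M M' ∧ Iso M' S

/-- Leaf-descendant (label) set of a node. -/
def descSet (N : Net α) (v : ℕ) : Set α :=
  {x | ∃ l, N.lab l = some x ∧ N.Reaches v l}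

def Adj (N : Net α) (u v : ℕ) : Prop := N.Edge u v ∨ N.Edge v u

def ConnectedIn (N : Net α) (S : Finset ℕ) (u v : ℕ) : Prop :=
  Relation.ReflTransGen (fun a b => a ∈ S ∧ b ∈ S ∧ N.Adj a b) u v

/-- A biconnected vertex set: at least 3 nodes, connected, and no cut-node. -/
def BiconnectedSet (N : Net α) (S : Finset ℕ) : Prop :=
  3 ≤ S.card ∧ S ⊆ N.verts ∧
  (∀ u ∈ S, ∀ v ∈ S, N.ConnectedIn S u v) ∧
  ∀ c ∈ S, ∀ u ∈ S.erase c, ∀ v ∈ S.erase c, N.ConnectedIn (S.erase c) u v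

/-- A biconnected component: a maximal biconnected set. -/
def BlobSet (N : Net α) (S : Finset ℕ) : Prop :=
  N.BiconnectedSet S ∧ ∀ T, N.BiconnectedSet T → S ⊆ T → S = T

/-- A blob: either a biconnected component, or a tree node in no biconnected component. -/
def IsBlob (N : Net α) (S : Finset ℕ) : Prop :=
  N.BlobSet S ∨ ∃ t, S = {t} ∧ N.IsTreeNode t ∧ ∀ T, N.BlobSet T → t ∉ T

/-- The top node of a blob: the node of the blob from which all its nodes are reachable. -/
def TopNode (N : Net α) (S : Finset ℕ) (v : ℕ) : Prop :=
  v ∈ S ∧ ∀ u ∈ S, N.Reaches v u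

/-- The blob tree of `N` contains a blob node labelled `A`. -/
def HasBlobNode (N : Net α) (A : Set α) : Prop :=
  ∃ S v, N.IsBlob S ∧ N.TopNode S v ∧ N.descSet v = A

/-- The blob tree of `N` has an edge from blob node `A` to blob node `B`. -/
def BTEdge (N : Net α) (A B : Set α) : Prop :=
  ∃ S T u v, N.IsBlob S ∧ N.IsBlob T ∧ S ≠ T ∧ N.TopNode S u ∧ N.TopNode T v ∧
    N.descSet u = A ∧ N.descSet v = B ∧ ∃ w ∈ S, N.Edge w v

def reticCount (N : Net α) (S : Finset ℕ) : ℕ := (S.filter fun v => N.IsRetic v).card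

/-- `N` is a level-`k` network. -/
def IsLevel (N : Net α) (k : ℕ) : Prop :=
  (∀ S, N.BiconnectedSet S → N.reticCount S ≤ k) ∧
  (k = 0 ∨ ∃ S, N.BiconnectedSet S ∧ N.reticCount S = k)

/-- `M` is a maximum lower-level subnetwork (MLLS) of the level-`k` network `N`:
obtained by deleting exactly one valid reticulation edge from every level-`k`
biconnected component and cleaning up. -/
def IsMLLS (N : Net α) (k : ℕ) (M : Net α) : Prop :=
  ∃ E : Finset (ℕ × ℕ),
    (∀ e ∈ E, N.ValidEdge e) ∧
    (∀ S, N.BlobSet S → N.reticCount S = k → ∃! e, e ∈ E ∧ e.1 ∈ S ∧ e.2 ∈ S) ∧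
    (∀ e ∈ E, ∃ S, N.BlobSet S ∧ N.reticCount S = k ∧ e.1 ∈ S ∧ e.2 ∈ S) ∧
    CleansTo (N.deleteEdges E) M

/-- A cherry on two leaves. -/
def Cherry (N : Net α) (x y : ℕ) : Prop :=
  N.IsLeaf x ∧ N.IsLeaf y ∧ x ≠ y ∧ ∃ p, N.Edge p x ∧ N.Edge p y

/-- A reticulated cherry on two leaves, with the reticulation on `y`. -/
def RetCherry (N : Net α) (x y : ℕ) : Prop :=
  N.IsLeaf x ∧ N.IsLeaf y ∧
  ∃ p r, N.IsRetic r ∧ N.Edge r y ∧ N.Edge p x ∧ N.Edge p r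

/-- A reticulated cherry shape on non-reticulation nodes `x, y` with nodes
`px, py, gy` and edges `(px,x), (px,py), (gy,py), (py,y)`, `py` a reticulation. -/
def RetCherryShape (N : Net α) (x y px py gy : ℕ) : Prop :=
  ¬ N.IsRetic x ∧ ¬ N.IsRetic y ∧ N.IsRetic py ∧ px ≠ gy ∧
  N.Edge px x ∧ N.Edge px py ∧ N.Edge gy py ∧ N.Edge py y

def DirPath (N : Net α) (l : List ℕ) : Prop := l ≠ [] ∧ l.Chain' N.Edge

/-- `l` is the node sequence of an up-down path from `x` to `y`: a directed path from
an apex down to `x`, reversed, followed by a directed path from the apex down to `y`. -/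
def IsUpDownPath (N : Net α) (x y : ℕ) (l : List ℕ) : Prop :=
  ∃ p q : List ℕ, N.DirPath p ∧ N.DirPath q ∧ p.head? = q.head? ∧
    p.getLast? = some x ∧ q.getLast? = some y ∧ l = p.reverse ++ q.tail

/-- `n` is the shortest up-down distance between `x` and `y` (an up-down path with `n`
edges has `n+1` nodes). -/
def IsUpDownDist (N : Net α) (x y n : ℕ) : Prop :=
  (∃ l, N.IsUpDownPath x y l ∧ l.length = n + 1) ∧
  ∀ l, N.IsUpDownPath x y l → n + 1 ≤ l.length

def relabel (N : Net α) (f : α → β) : Net β :=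
  ⟨N.verts, N.edges, fun v => (N.lab v).map f⟩

/-- Collapse the pendant subnetwork rooted at `y` to a single leaf labelled `A`. -/
def collapseAt (N : Net α) (y : ℕ) (A : α) : Net α :=
  ⟨N.verts.filter (fun v => v = y ∨ ¬ N.Reaches y v),
   N.edges.filter (fun e => ¬ N.Reaches y e.1),
   fun v => if v = y then some A else N.lab v⟩

/-- Leaf-descendant set for networks whose leaves are labelled by sets of taxa. -/
def descUnion (N : Net (Set α)) (v : ℕ) : Set α :=
  {x | ∃ l s, N.lab l = some s ∧ x ∈ s ∧ N.Reaches v l}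

def HasBlobNodeU (N : Net (Set α)) (A : Set α) : Prop :=
  ∃ S v, N.IsBlob S ∧ N.TopNode S v ∧ N.descUnion v = A

/-- `M` is a subnetwork of `N`: displayed by `N` and not `N` itself. -/
def Subnet (N M : Net α) : Prop := M.IsNetwork ∧ N.Displays M ∧ ¬ N.Iso M

/-- Equality of sets of networks up to isomorphism. -/
def SetEquiv (S T : Set (Net α)) : Prop :=
  ∀ M, (∃ M₁ ∈ S, Iso M M₁) ↔ ∃ M₂ ∈ T, Iso M M₂

/-- The subnetworks of `N` of level at most `k - 1`. -/
def lowerSubnets (N : Net α) (k : ℕ) : Set (Net α) :=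
  {M | N.Subnet M ∧ ∃ j < k, M.IsLevel j}

/-- The set of all MLLSs of `N`. -/
def mllsSet (N : Net α) : Set (Net α) :=
  {M | ∃ k, N.IsLevel k ∧ N.IsMLLS k M}

end Net

namespace MaxSubnetTC

open Finset

variable {X : Type}

lemma eq_singleton_of_card_one {β : Type*} {s : Finset β} {x : β}
    (h1 : s.card = 1) (hx : x ∈ s) : s = {x} := by
  obtain ⟨a, ha⟩ := Finset.card_eq_one.mp h1
  subst ha
  rw [Finset.mem_singleton] at hx
  subst hx; rfl

/-- Local configuration around a deleted reticulation edge `(p,r)` in a tree-child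
network `N`:  `pp → p`, `p → pc`, `q → r`, `r → c` are the surrounding edges. -/
structure Ctx (X : Type) where
  N : Net X
  p : ℕ
  r : ℕ
  pp : ℕ
  pc : ℕ
  q : ℕ
  c : ℕ
  hend : ∀ e ∈ N.edges, e.1 ∈ N.verts ∧ e.2 ∈ N.verts
  hacyc : ∀ u v, N.Edge u v → ¬ N.Reaches v u
  hroot : ∃! ρ, N.IsRoot ρ
  htype : ∀ v ∈ N.verts, N.IsRoot v ∨ N.IsLeaf v ∨ N.IsTreeNode v ∨ N.IsRetic v
  hlabiff : ∀ v, (∃ x, N.lab v = some x) ↔ N.IsLeaf v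
  hlabuniq : ∀ x : X, ∃! v, N.lab v = some x
  htc : ∀ v ∈ N.verts, ¬ N.IsLeaf v → ∃ ch, N.Edge v ch ∧ (N.IsTreeNode ch ∨ N.IsLeaf ch)
  inP : N.edges.filter (fun e => e.2 = p) = {(pp, p)}
  outP : N.edges.filter (fun e => e.1 = p) = {(p, r), (p, pc)}
  inR : N.edges.filter (fun e => e.2 = r) = {(p, r), (q, r)}
  outR : N.edges.filter (fun e => e.1 = r) = {(r, c)}
  treeP : N.IsTreeNode p
  reticR : N.IsRetic r
  pcTL : N.IsTreeNode pc ∨ N.IsLeaf pc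
  cTL : N.IsTreeNode c ∨ N.IsLeaf c
  dpr : p ≠ r
  dppp : pp ≠ p
  dppr : pp ≠ r
  dpcp : pc ≠ p
  dpcr : pc ≠ r
  dqp : q ≠ p
  dqr : q ≠ r
  dcp : c ≠ p
  dcr : c ≠ r
  dpcc : pc ≠ c
  dppc : pp ≠ c
  dpppc : pp ≠ pc
  dqc : q ≠ c
  hppc : (pp, pc) ∉ N.edges
  hqc : (q, c) ∉ N.edges
  hqout2 : 2 ≤ N.outdeg q

namespace Ctx

variable (C : Ctx X)

/-- membership characterizations -/
lemma edge_to_p {v : ℕ} : (v, C.p) ∈ C.N.edges ↔ v = C.pp := by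
  constructor
  · intro h
    have : (v, C.p) ∈ C.N.edges.filter (fun e => e.2 = C.p) :=
      Finset.mem_filter.mpr ⟨h, rfl⟩
    rw [C.inP, Finset.mem_singleton, Prod.mk.injEq] at this
    exact this.1
  · rintro rfl
    have : (C.pp, C.p) ∈ C.N.edges.filter (fun e => e.2 = C.p) := by
      rw [C.inP]; exact Finset.mem_singleton_self _
    exact (Finset.mem_filter.mp this).1

lemma edge_from_p {v : ℕ} : (C.p, v) ∈ C.N.edges ↔ v = C.r ∨ v = C.pc := by
  constructor
  · intro h
    have : (C.p, v) ∈ C.N.edges.filter (fun e => e.1 = C.p) :=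
      Finset.mem_filter.mpr ⟨h, rfl⟩
    rw [C.outP, Finset.mem_insert, Finset.mem_singleton, Prod.mk.injEq, Prod.mk.injEq] at this
    rcases this with h | h
    · exact Or.inl h.2
    · exact Or.inr h.2
  · intro h
    have : (C.p, v) ∈ C.N.edges.filter (fun e => e.1 = C.p) := by
      rw [C.outP]
      rcases h with rfl | rfl
      · exact Finset.mem_insert_self _ _
      · exact Finset.mem_insert_of_mem (Finset.mem_singleton_self _)
    exact (Finset.mem_filter.mp this).1

lemma edge_to_r {v : ℕ} : (v, C.r) ∈ C.N.edges ↔ v = C.p ∨ v = C.q := by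
  constructor
  · intro h
    have : (v, C.r) ∈ C.N.edges.filter (fun e => e.2 = C.r) :=
      Finset.mem_filter.mpr ⟨h, rfl⟩
    rw [C.inR, Finset.mem_insert, Finset.mem_singleton, Prod.mk.injEq, Prod.mk.injEq] at this
    rcases this with h | h
    · exact Or.inl h.1
    · exact Or.inr h.1
  · intro h
    have : (v, C.r) ∈ C.N.edges.filter (fun e => e.2 = C.r) := by
      rw [C.inR]
      rcases h with rfl | rfl
      · exact Finset.mem_insert_self _ _
      · exact Finset.mem_insert_of_mem (Finset.mem_singleton_self _)
    exact (Finset.mem_filter.mp this).1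

lemma edge_from_r {v : ℕ} : (C.r, v) ∈ C.N.edges ↔ v = C.c := by
  constructor
  · intro h
    have : (C.r, v) ∈ C.N.edges.filter (fun e => e.1 = C.r) :=
      Finset.mem_filter.mpr ⟨h, rfl⟩
    rw [C.outR, Finset.mem_singleton, Prod.mk.injEq] at this
    exact this.2
  · rintro rfl
    have : (C.r, C.c) ∈ C.N.edges.filter (fun e => e.1 = C.r) := by
      rw [C.outR]; exact Finset.mem_singleton_self _
    exact (Finset.mem_filter.mp this).1

lemma hprE : (C.p, C.r) ∈ C.N.edges := C.edge_from_p.mpr (Or.inl rfl)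
lemma hppE : (C.pp, C.p) ∈ C.N.edges := C.edge_to_p.mpr rfl
lemma hpcE : (C.p, C.pc) ∈ C.N.edges := C.edge_from_p.mpr (Or.inr rfl)
lemma hqrE : (C.q, C.r) ∈ C.N.edges := C.edge_to_r.mpr (Or.inr rfl)
lemma hrcE : (C.r, C.c) ∈ C.N.edges := C.edge_from_r.mpr rfl

/-- The intermediate and final graphs. -/
def D : Net X := C.N.deleteEdge (C.p, C.r)

def Fp : Finset (ℕ × ℕ) := C.N.edges.filter (fun e => e.1 ≠ C.p ∧ e.2 ≠ C.p)

def Fr : Finset (ℕ × ℕ) := C.N.edges.filter (fun e => e.1 ≠ C.r ∧ e.2 ≠ C.r)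

def Fpr : Finset (ℕ × ℕ) :=
  C.N.edges.filter (fun e => (e.1 ≠ C.p ∧ e.2 ≠ C.p) ∧ e.1 ≠ C.r ∧ e.2 ≠ C.r)

def Sp : Net X := ⟨C.N.verts.erase C.p, insert (C.pp, C.pc) C.Fp, C.N.lab⟩

def Sr : Net X := ⟨C.N.verts.erase C.r, insert (C.q, C.c) C.Fr, C.N.lab⟩

def Mf : Net X :=
  ⟨(C.N.verts.erase C.p).erase C.r,
    insert (C.q, C.c) (insert (C.pp, C.pc) C.Fpr), C.N.lab⟩


/-! ### degree computations -/

lemma outdegN_p : C.N.outdeg C.p = 2 := C.treeP.2.2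
lemma indegN_p : C.N.indeg C.p = 1 := C.treeP.2.1
lemma outdegN_r : C.N.outdeg C.r = 1 := C.reticR.2.2
lemma indegN_r : C.N.indeg C.r = 2 := C.reticR.2.1

lemma outdeg_D (v : ℕ) : C.D.outdeg v = if v = C.p then 1 else C.N.outdeg v := by
  show ((C.N.edges.erase (C.p, C.r)).filter (fun e => e.1 = v)).card = _
  rw [Finset.filter_erase, Finset.card_erase_eq_ite]
  by_cases hv : v = C.p
  · subst hv
    have hm : (C.p, C.r) ∈ C.N.edges.filter (fun e => e.1 = C.p) :=
      Finset.mem_filter.mpr ⟨C.hprE, rfl⟩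
    rw [if_pos hm, if_pos rfl]
    have h2 : (C.N.edges.filter (fun e => e.1 = C.p)).card = 2 := C.outdegN_p
    omega
  · rw [if_neg hv, if_neg]
    · rfl
    · intro h
      exact hv ((Finset.mem_filter.mp h).2).symm

lemma indeg_D (v : ℕ) : C.D.indeg v = if v = C.r then 1 else C.N.indeg v := by
  show ((C.N.edges.erase (C.p, C.r)).filter (fun e => e.2 = v)).card = _
  rw [Finset.filter_erase, Finset.card_erase_eq_ite]
  by_cases hv : v = C.r
  · subst hv
    have hm : (C.p, C.r) ∈ C.N.edges.filter (fun e => e.2 = C.r) :=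
      Finset.mem_filter.mpr ⟨C.hprE, rfl⟩
    rw [if_pos hm, if_pos rfl]
    have h2 : (C.N.edges.filter (fun e => e.2 = C.r)).card = 2 := C.indegN_r
    omega
  · rw [if_neg hv, if_neg]
    · rfl
    · intro h
      exact hv ((Finset.mem_filter.mp h).2).symm

lemma filter_out_Fp {v : ℕ} (hv : v ≠ C.p) :
    C.Fp.filter (fun e => e.1 = v) = (C.N.edges.filter (fun e => e.1 = v)).erase (v, C.p) := by
  ext ⟨e1, e2⟩
  simp only [Ctx.Fp, Finset.mem_filter, Finset.mem_erase, Prod.mk.injEq, ne_eq, not_and]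
  constructor
  · rintro ⟨⟨h1, _, h3⟩, h4⟩
    exact ⟨fun _ => h3, ⟨h1, h4⟩⟩
  · rintro ⟨h1, h2, h3⟩
    exact ⟨⟨h2, h3 ▸ hv, h1 h3⟩, h3⟩

lemma filter_in_Fp {v : ℕ} (hv : v ≠ C.p) :
    C.Fp.filter (fun e => e.2 = v) = (C.N.edges.filter (fun e => e.2 = v)).erase (C.p, v) := by
  ext ⟨e1, e2⟩
  simp only [Ctx.Fp, Finset.mem_filter, Finset.mem_erase, Prod.mk.injEq, ne_eq, not_and]
  constructor
  · rintro ⟨⟨h1, h2, _⟩, h4⟩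
    exact ⟨fun hh => absurd hh h2, ⟨h1, h4⟩⟩
  · rintro ⟨h1, h2, h3⟩
    refine ⟨⟨h2, fun hh => (h1 hh) h3, h3 ▸ hv⟩, h3⟩

lemma filter_out_Fr {v : ℕ} (hv : v ≠ C.r) :
    C.Fr.filter (fun e => e.1 = v) = (C.N.edges.filter (fun e => e.1 = v)).erase (v, C.r) := by
  ext ⟨e1, e2⟩
  simp only [Ctx.Fr, Finset.mem_filter, Finset.mem_erase, Prod.mk.injEq, ne_eq, not_and]
  constructor
  · rintro ⟨⟨h1, _, h3⟩, h4⟩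
    exact ⟨fun _ => h3, ⟨h1, h4⟩⟩
  · rintro ⟨h1, h2, h3⟩
    exact ⟨⟨h2, h3 ▸ hv, h1 h3⟩, h3⟩

lemma filter_in_Fr {v : ℕ} (hv : v ≠ C.r) :
    C.Fr.filter (fun e => e.2 = v) = (C.N.edges.filter (fun e => e.2 = v)).erase (C.r, v) := by
  ext ⟨e1, e2⟩
  simp only [Ctx.Fr, Finset.mem_filter, Finset.mem_erase, Prod.mk.injEq, ne_eq, not_and]
  constructor
  · rintro ⟨⟨h1, h2, _⟩, h4⟩
    exact ⟨fun hh => absurd hh h2, ⟨h1, h4⟩⟩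
  · rintro ⟨h1, h2, h3⟩
    refine ⟨⟨h2, fun hh => (h1 hh) h3, h3 ▸ hv⟩, h3⟩

lemma filter_out_Fpr {v : ℕ} (hvp : v ≠ C.p) (hvr : v ≠ C.r) :
    C.Fpr.filter (fun e => e.1 = v) =
      ((C.N.edges.filter (fun e => e.1 = v)).erase (v, C.p)).erase (v, C.r) := by
  ext ⟨e1, e2⟩
  simp only [Ctx.Fpr, Finset.mem_filter, Finset.mem_erase, Prod.mk.injEq, ne_eq, not_and]
  constructor
  · rintro ⟨⟨h1, ⟨_, h3⟩, _, h5⟩, h6⟩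
    exact ⟨fun _ => h5, fun _ => h3, h1, h6⟩
  · rintro ⟨h1, h2, h3, h4⟩
    exact ⟨⟨h3, ⟨h4 ▸ hvp, h2 h4⟩, h4 ▸ hvr, h1 h4⟩, h4⟩

lemma filter_in_Fpr {v : ℕ} (hvp : v ≠ C.p) (hvr : v ≠ C.r) :
    C.Fpr.filter (fun e => e.2 = v) =
      ((C.N.edges.filter (fun e => e.2 = v)).erase (C.p, v)).erase (C.r, v) := by
  ext ⟨e1, e2⟩
  simp only [Ctx.Fpr, Finset.mem_filter, Finset.mem_erase, Prod.mk.injEq, ne_eq, not_and]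
  constructor
  · rintro ⟨⟨h1, ⟨h2, _⟩, h4, _⟩, h6⟩
    exact ⟨fun hh => absurd hh h4, fun hh => absurd hh h2, h1, h6⟩
  · rintro ⟨h1, h2, h3, h4⟩
    exact ⟨⟨h3, ⟨fun hh => (h2 hh) h4, h4 ▸ hvp⟩, fun hh => (h1 hh) h4, h4 ▸ hvr⟩, h4⟩

lemma outdeg_Sp (v : ℕ) : C.Sp.outdeg v = if v = C.p then 0 else C.N.outdeg v := by
  show ((insert (C.pp, C.pc) C.Fp).filter (fun e => e.1 = v)).card = _
  rw [Finset.filter_insert]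
  by_cases hv : v = C.p
  · subst hv
    rw [if_neg (by exact C.dppp), if_pos rfl, Finset.card_eq_zero]
    ext ⟨e1, e2⟩
    simp only [Ctx.Fp, Finset.mem_filter, Finset.notMem_empty, iff_false, ne_eq]
    rintro ⟨⟨_, h2, _⟩, h4⟩
    exact h2 h4
  · rw [if_neg hv, C.filter_out_Fp hv]
    by_cases hpp : v = C.pp
    · subst hpp
      have hmem : (C.pp, C.p) ∈ C.N.edges.filter (fun e => e.1 = C.pp) :=
        Finset.mem_filter.mpr ⟨C.hppE, rfl⟩
      rw [if_pos rfl, Finset.card_insert_of_notMem (by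
        intro hh
        exact C.hppc (Finset.mem_filter.mp (Finset.mem_of_mem_erase hh)).1)]
      rw [Finset.card_erase_eq_ite, if_pos hmem]
      have h1 : 1 ≤ (C.N.edges.filter (fun e => e.1 = C.pp)).card :=
        Finset.card_pos.mpr ⟨_, hmem⟩
      show (C.N.edges.filter (fun e => e.1 = C.pp)).card - 1 + 1 =
        (C.N.edges.filter (fun e => e.1 = C.pp)).card
      omega
    · rw [if_neg (fun hh => hpp hh.symm), Finset.card_erase_eq_ite, if_neg]
      · rfl
      · intro hh
        exact hpp (C.edge_to_p.mp (Finset.mem_filter.mp hh).1)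

lemma indeg_Sp (v : ℕ) :
    C.Sp.indeg v = if v = C.p then 0 else if v = C.r then 1 else C.N.indeg v := by
  show ((insert (C.pp, C.pc) C.Fp).filter (fun e => e.2 = v)).card = _
  rw [Finset.filter_insert]
  by_cases hv : v = C.p
  · subst hv
    rw [if_neg (by exact C.dpcp), if_pos rfl, Finset.card_eq_zero]
    ext ⟨e1, e2⟩
    simp only [Ctx.Fp, Finset.mem_filter, Finset.notMem_empty, iff_false, ne_eq]
    rintro ⟨⟨_, _, h3⟩, h4⟩
    exact h3 h4
  · rw [if_neg hv, C.filter_in_Fp hv]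
    by_cases hr : v = C.r
    · subst hr
      have hmem : (C.p, C.r) ∈ C.N.edges.filter (fun e => e.2 = C.r) :=
        Finset.mem_filter.mpr ⟨C.hprE, rfl⟩
      rw [if_neg (by exact C.dpcr), if_pos rfl, Finset.card_erase_eq_ite, if_pos hmem]
      have h2 : (C.N.edges.filter (fun e => e.2 = C.r)).card = 2 := C.indegN_r
      omega
    · rw [if_neg hr]
      by_cases hpc : v = C.pc
      · subst hpc
        have hmem : (C.p, C.pc) ∈ C.N.edges.filter (fun e => e.2 = C.pc) :=
          Finset.mem_filter.mpr ⟨C.hpcE, rfl⟩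
        rw [if_pos rfl, Finset.card_insert_of_notMem (by
          intro hh
          exact C.hppc (Finset.mem_filter.mp (Finset.mem_of_mem_erase hh)).1)]
        rw [Finset.card_erase_eq_ite, if_pos hmem]
        have h1 : 1 ≤ (C.N.edges.filter (fun e => e.2 = C.pc)).card :=
          Finset.card_pos.mpr ⟨_, hmem⟩
        show (C.N.edges.filter (fun e => e.2 = C.pc)).card - 1 + 1 =
          (C.N.edges.filter (fun e => e.2 = C.pc)).card
        omega
      · rw [if_neg (fun hh => hpc hh.symm), Finset.card_erase_eq_ite, if_neg]
        · rfl
        · intro hh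
          rcases C.edge_from_p.mp (Finset.mem_filter.mp hh).1 with h | h
          · exact hr h
          · exact hpc h

lemma outdeg_Sr (v : ℕ) :
    C.Sr.outdeg v = if v = C.r then 0 else if v = C.p then 1 else C.N.outdeg v := by
  show ((insert (C.q, C.c) C.Fr).filter (fun e => e.1 = v)).card = _
  rw [Finset.filter_insert]
  by_cases hv : v = C.r
  · subst hv
    rw [if_neg (by exact C.dqr), if_pos rfl, Finset.card_eq_zero]
    ext ⟨e1, e2⟩
    simp only [Ctx.Fr, Finset.mem_filter, Finset.notMem_empty, iff_false, ne_eq]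
    rintro ⟨⟨_, h2, _⟩, h4⟩
    exact h2 h4
  · rw [if_neg hv, C.filter_out_Fr hv]
    by_cases hp : v = C.p
    · subst hp
      have hmem : (C.p, C.r) ∈ C.N.edges.filter (fun e => e.1 = C.p) :=
        Finset.mem_filter.mpr ⟨C.hprE, rfl⟩
      rw [if_neg (by exact C.dqp), if_pos rfl, Finset.card_erase_eq_ite, if_pos hmem]
      have h2 : (C.N.edges.filter (fun e => e.1 = C.p)).card = 2 := C.outdegN_p
      omega
    · rw [if_neg hp]
      by_cases hq : v = C.q
      · subst hq
        have hmem : (C.q, C.r) ∈ C.N.edges.filter (fun e => e.1 = C.q) :=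
          Finset.mem_filter.mpr ⟨C.hqrE, rfl⟩
        rw [if_pos rfl, Finset.card_insert_of_notMem (by
          intro hh
          exact C.hqc (Finset.mem_filter.mp (Finset.mem_of_mem_erase hh)).1)]
        rw [Finset.card_erase_eq_ite, if_pos hmem]
        have h1 : 1 ≤ (C.N.edges.filter (fun e => e.1 = C.q)).card :=
          Finset.card_pos.mpr ⟨_, hmem⟩
        show (C.N.edges.filter (fun e => e.1 = C.q)).card - 1 + 1 =
          (C.N.edges.filter (fun e => e.1 = C.q)).card
        omega
      · rw [if_neg (fun hh => hq hh.symm), Finset.card_erase_eq_ite, if_neg]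
        · rfl
        · intro hh
          rcases C.edge_to_r.mp (Finset.mem_filter.mp hh).1 with h | h
          · exact hp h
          · exact hq h

lemma indeg_Sr (v : ℕ) : C.Sr.indeg v = if v = C.r then 0 else C.N.indeg v := by
  show ((insert (C.q, C.c) C.Fr).filter (fun e => e.2 = v)).card = _
  rw [Finset.filter_insert]
  by_cases hv : v = C.r
  · subst hv
    rw [if_neg (by exact C.dcr), if_pos rfl, Finset.card_eq_zero]
    ext ⟨e1, e2⟩
    simp only [Ctx.Fr, Finset.mem_filter, Finset.notMem_empty, iff_false, ne_eq]
    rintro ⟨⟨_, _, h3⟩, h4⟩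
    exact h3 h4
  · rw [if_neg hv, C.filter_in_Fr hv]
    by_cases hc : v = C.c
    · subst hc
      have hmem : (C.r, C.c) ∈ C.N.edges.filter (fun e => e.2 = C.c) :=
        Finset.mem_filter.mpr ⟨C.hrcE, rfl⟩
      rw [if_pos rfl, Finset.card_insert_of_notMem (by
        intro hh
        exact C.hqc (Finset.mem_filter.mp (Finset.mem_of_mem_erase hh)).1)]
      rw [Finset.card_erase_eq_ite, if_pos hmem]
      have h1 : 1 ≤ (C.N.edges.filter (fun e => e.2 = C.c)).card :=
        Finset.card_pos.mpr ⟨_, hmem⟩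
      show (C.N.edges.filter (fun e => e.2 = C.c)).card - 1 + 1 =
        (C.N.edges.filter (fun e => e.2 = C.c)).card
      omega
    · rw [if_neg (fun hh => hc hh.symm), Finset.card_erase_eq_ite, if_neg]
      · rfl
      · intro hh
        exact hc (C.edge_from_r.mp (Finset.mem_filter.mp hh).1)

lemma outdeg_Mf (v : ℕ) :
    C.Mf.outdeg v = if v = C.p ∨ v = C.r then 0 else C.N.outdeg v := by
  show ((insert (C.q, C.c) (insert (C.pp, C.pc) C.Fpr)).filter (fun e => e.1 = v)).card = _
  rw [Finset.filter_insert, Finset.filter_insert]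
  by_cases hvp : v = C.p
  · subst hvp
    rw [if_neg (by exact C.dqp), if_neg (by exact C.dppp), if_pos (Or.inl rfl),
      Finset.card_eq_zero]
    ext ⟨e1, e2⟩
    simp only [Ctx.Fpr, Finset.mem_filter, Finset.notMem_empty, iff_false, ne_eq]
    rintro ⟨⟨_, ⟨h2, _⟩, _⟩, h4⟩
    exact h2 h4
  by_cases hvr : v = C.r
  · subst hvr
    rw [if_neg (by exact C.dqr), if_neg (by exact C.dppr), if_pos (Or.inr rfl),
      Finset.card_eq_zero]
    ext ⟨e1, e2⟩
    simp only [Ctx.Fpr, Finset.mem_filter, Finset.notMem_empty, iff_false, ne_eq]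
    rintro ⟨⟨_, _, h3, _⟩, h4⟩
    exact h3 h4
  rw [if_neg (by tauto : ¬(v = C.p ∨ v = C.r)), C.filter_out_Fpr hvp hvr]
  have hvpE : (v, C.p) ∈ C.N.edges.filter (fun e => e.1 = v) ↔ v = C.pp := by
    constructor
    · intro hh; exact C.edge_to_p.mp (Finset.mem_filter.mp hh).1
    · rintro rfl; exact Finset.mem_filter.mpr ⟨C.hppE, rfl⟩
  have hvrE : (v, C.r) ∈ (C.N.edges.filter (fun e => e.1 = v)).erase (v, C.p) ↔ v = C.q := by
    constructor
    · intro hh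
      rcases C.edge_to_r.mp (Finset.mem_filter.mp (Finset.mem_of_mem_erase hh)).1 with h | h
      · exact absurd h hvp
      · exact h
    · rintro rfl
      refine Finset.mem_erase.mpr ⟨?_, Finset.mem_filter.mpr ⟨C.hqrE, rfl⟩⟩
      simp only [Prod.mk.injEq, not_and, ne_eq]
      intro _ hh; exact C.dpr hh.symm
  have hYnotpp : (C.pp, C.pc) ∉
      ((C.N.edges.filter (fun e => e.1 = v)).erase (v, C.p)).erase (v, C.r) := by
    intro hh
    exact C.hppc (Finset.mem_filter.mp
      (Finset.mem_of_mem_erase (Finset.mem_of_mem_erase hh))).1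
  have hYnotqc : (C.q, C.c) ∉
      ((C.N.edges.filter (fun e => e.1 = v)).erase (v, C.p)).erase (v, C.r) := by
    intro hh
    exact C.hqc (Finset.mem_filter.mp
      (Finset.mem_of_mem_erase (Finset.mem_of_mem_erase hh))).1
  by_cases hpp : C.pp = v
  · by_cases hq : C.q = v
    · rw [if_pos hpp, if_pos hq, Finset.card_insert_of_notMem (by
        intro hh
        rcases Finset.mem_insert.mp hh with hh | hh
        · exact C.dpcc (congrArg Prod.snd hh).symm
        · exact hYnotqc hh)]
      rw [Finset.card_insert_of_notMem hYnotpp]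
      rw [Finset.card_erase_eq_ite, Finset.card_erase_eq_ite,
        if_pos (hvrE.mpr hq.symm), if_pos (hvpE.mpr hpp.symm)]
      have h2 : 1 ≤ ((C.N.edges.filter (fun e => e.1 = v)).erase (v, C.p)).card :=
        Finset.card_pos.mpr ⟨_, hvrE.mpr hq.symm⟩
      rw [Finset.card_erase_eq_ite, if_pos (hvpE.mpr hpp.symm)] at h2
      have h1 : 1 ≤ (C.N.edges.filter (fun e => e.1 = v)).card :=
        Finset.card_pos.mpr ⟨_, hvpE.mpr hpp.symm⟩
      show ((C.N.edges.filter (fun e => e.1 = v)).card - 1 - 1) + 1 + 1 =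
        (C.N.edges.filter (fun e => e.1 = v)).card
      omega
    · rw [if_pos hpp, if_neg hq, Finset.card_insert_of_notMem hYnotpp]
      rw [Finset.card_erase_eq_ite, Finset.card_erase_eq_ite,
        if_neg (fun hh => hq (hvrE.mp hh).symm), if_pos (hvpE.mpr hpp.symm)]
      have h1 : 1 ≤ (C.N.edges.filter (fun e => e.1 = v)).card :=
        Finset.card_pos.mpr ⟨_, hvpE.mpr hpp.symm⟩
      show ((C.N.edges.filter (fun e => e.1 = v)).card - 1) + 1 =
        (C.N.edges.filter (fun e => e.1 = v)).card
      omega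
  · by_cases hq : C.q = v
    · rw [if_neg hpp, if_pos hq, Finset.card_insert_of_notMem hYnotqc]
      rw [Finset.card_erase_eq_ite, Finset.card_erase_eq_ite,
        if_pos (hvrE.mpr hq.symm), if_neg (fun hh => hpp (hvpE.mp hh).symm)]
      have h1 : 1 ≤ (C.N.edges.filter (fun e => e.1 = v)).card :=
        Finset.card_pos.mpr ⟨_, Finset.mem_of_mem_erase (hvrE.mpr hq.symm)⟩
      show ((C.N.edges.filter (fun e => e.1 = v)).card - 1) + 1 =
        (C.N.edges.filter (fun e => e.1 = v)).card
      omega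
    · rw [if_neg hpp, if_neg hq, Finset.card_erase_eq_ite, Finset.card_erase_eq_ite,
        if_neg (fun hh => hq (hvrE.mp hh).symm), if_neg (fun hh => hpp (hvpE.mp hh).symm)]
      rfl

lemma indeg_Mf (v : ℕ) :
    C.Mf.indeg v = if v = C.p ∨ v = C.r then 0 else C.N.indeg v := by
  show ((insert (C.q, C.c) (insert (C.pp, C.pc) C.Fpr)).filter (fun e => e.2 = v)).card = _
  rw [Finset.filter_insert, Finset.filter_insert]
  by_cases hvp : v = C.p
  · subst hvp
    rw [if_neg (by exact C.dcp), if_neg (by exact C.dpcp), if_pos (Or.inl rfl),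
      Finset.card_eq_zero]
    ext ⟨e1, e2⟩
    simp only [Ctx.Fpr, Finset.mem_filter, Finset.notMem_empty, iff_false, ne_eq]
    rintro ⟨⟨_, ⟨_, h2⟩, _⟩, h4⟩
    exact h2 h4
  by_cases hvr : v = C.r
  · subst hvr
    rw [if_neg (by exact C.dcr), if_neg (by exact C.dpcr), if_pos (Or.inr rfl),
      Finset.card_eq_zero]
    ext ⟨e1, e2⟩
    simp only [Ctx.Fpr, Finset.mem_filter, Finset.notMem_empty, iff_false, ne_eq]
    rintro ⟨⟨_, _, _, h3⟩, h4⟩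
    exact h3 h4
  rw [if_neg (by tauto : ¬(v = C.p ∨ v = C.r)), C.filter_in_Fpr hvp hvr]
  have hvpE : (C.p, v) ∈ C.N.edges.filter (fun e => e.2 = v) ↔ v = C.pc := by
    constructor
    · intro hh
      rcases C.edge_from_p.mp (Finset.mem_filter.mp hh).1 with h | h
      · exact absurd h hvr
      · exact h
    · rintro rfl; exact Finset.mem_filter.mpr ⟨C.hpcE, rfl⟩
  have hvrE : (C.r, v) ∈ (C.N.edges.filter (fun e => e.2 = v)).erase (C.p, v) ↔ v = C.c := by
    constructor
    · intro hh
      exact C.edge_from_r.mp (Finset.mem_filter.mp (Finset.mem_of_mem_erase hh)).1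
    · rintro rfl
      refine Finset.mem_erase.mpr ⟨?_, Finset.mem_filter.mpr ⟨C.hrcE, rfl⟩⟩
      simp only [Prod.mk.injEq, not_and, ne_eq]
      intro hh; exact absurd hh.symm C.dpr
  have hYnotpp : (C.pp, C.pc) ∉
      ((C.N.edges.filter (fun e => e.2 = v)).erase (C.p, v)).erase (C.r, v) := by
    intro hh
    exact C.hppc (Finset.mem_filter.mp
      (Finset.mem_of_mem_erase (Finset.mem_of_mem_erase hh))).1
  have hYnotqc : (C.q, C.c) ∉
      ((C.N.edges.filter (fun e => e.2 = v)).erase (C.p, v)).erase (C.r, v) := by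
    intro hh
    exact C.hqc (Finset.mem_filter.mp
      (Finset.mem_of_mem_erase (Finset.mem_of_mem_erase hh))).1
  by_cases hpc : C.pc = v
  · have hc : ¬ C.c = v := fun hh => C.dpcc (hpc.trans hh.symm)
    rw [if_neg hc, if_pos hpc, Finset.card_insert_of_notMem hYnotpp]
    rw [Finset.card_erase_eq_ite, Finset.card_erase_eq_ite,
      if_neg (fun hh => hc (hvrE.mp hh).symm), if_pos (hvpE.mpr hpc.symm)]
    have h1 : 1 ≤ (C.N.edges.filter (fun e => e.2 = v)).card :=
      Finset.card_pos.mpr ⟨_, hvpE.mpr hpc.symm⟩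
    show ((C.N.edges.filter (fun e => e.2 = v)).card - 1) + 1 =
      (C.N.edges.filter (fun e => e.2 = v)).card
    omega
  · by_cases hc : C.c = v
    · rw [if_pos hc, if_neg hpc, Finset.card_insert_of_notMem hYnotqc]
      rw [Finset.card_erase_eq_ite, Finset.card_erase_eq_ite,
        if_pos (hvrE.mpr hc.symm), if_neg (fun hh => hpc (hvpE.mp hh).symm)]
      have h1 : 1 ≤ (C.N.edges.filter (fun e => e.2 = v)).card :=
        Finset.card_pos.mpr ⟨_, Finset.mem_of_mem_erase (hvrE.mpr hc.symm)⟩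
      show ((C.N.edges.filter (fun e => e.2 = v)).card - 1) + 1 =
        (C.N.edges.filter (fun e => e.2 = v)).card
      omega
    · rw [if_neg hc, if_neg hpc, Finset.card_erase_eq_ite, Finset.card_erase_eq_ite,
        if_neg (fun hh => hc (hvrE.mp hh).symm), if_neg (fun hh => hpc (hvpE.mp hh).symm)]
      rfl

/-! ### singleton filters and edge-set identities -/

lemma inD_p : C.D.edges.filter (fun e => e.2 = C.p) = {(C.pp, C.p)} := by
  show ((C.N.edges.erase (C.p, C.r)).filter (fun e => e.2 = C.p)) = _
  rw [Finset.filter_erase, C.inP, Finset.erase_eq_of_notMem]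
  intro hh
  exact C.dpr (congrArg Prod.snd (Finset.mem_singleton.mp hh)).symm

lemma outD_p : C.D.edges.filter (fun e => e.1 = C.p) = {(C.p, C.pc)} := by
  show ((C.N.edges.erase (C.p, C.r)).filter (fun e => e.1 = C.p)) = _
  rw [Finset.filter_erase, C.outP, Finset.erase_insert]
  intro hh
  exact C.dpcr (congrArg Prod.snd (Finset.mem_singleton.mp hh)).symm

lemma inD_r : C.D.edges.filter (fun e => e.2 = C.r) = {(C.q, C.r)} := by
  show ((C.N.edges.erase (C.p, C.r)).filter (fun e => e.2 = C.r)) = _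
  rw [Finset.filter_erase, C.inR, Finset.erase_insert]
  intro hh
  exact C.dqp (congrArg Prod.fst (Finset.mem_singleton.mp hh)).symm

lemma outD_r : C.D.edges.filter (fun e => e.1 = C.r) = {(C.r, C.c)} := by
  show ((C.N.edges.erase (C.p, C.r)).filter (fun e => e.1 = C.r)) = _
  rw [Finset.filter_erase, C.outR, Finset.erase_eq_of_notMem]
  intro hh
  exact C.dpr (congrArg Prod.fst (Finset.mem_singleton.mp hh))

lemma inSp_r : C.Sp.edges.filter (fun e => e.2 = C.r) = {(C.q, C.r)} := by
  show ((insert (C.pp, C.pc) C.Fp).filter (fun e => e.2 = C.r)) = _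
  rw [Finset.filter_insert, if_neg (by exact C.dpcr),
    C.filter_in_Fp (fun hh => C.dpr hh.symm), C.inR, Finset.erase_insert]
  intro hh
  exact C.dqp (congrArg Prod.fst (Finset.mem_singleton.mp hh)).symm

lemma outSp_r : C.Sp.edges.filter (fun e => e.1 = C.r) = {(C.r, C.c)} := by
  show ((insert (C.pp, C.pc) C.Fp).filter (fun e => e.1 = C.r)) = _
  rw [Finset.filter_insert, if_neg (by exact C.dppr),
    C.filter_out_Fp (fun hh => C.dpr hh.symm), C.outR, Finset.erase_eq_of_notMem]
  intro hh
  exact C.dcp (congrArg Prod.snd (Finset.mem_singleton.mp hh)).symm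

lemma inSr_p : C.Sr.edges.filter (fun e => e.2 = C.p) = {(C.pp, C.p)} := by
  show ((insert (C.q, C.c) C.Fr).filter (fun e => e.2 = C.p)) = _
  rw [Finset.filter_insert, if_neg (by exact C.dcp),
    C.filter_in_Fr C.dpr, C.inP, Finset.erase_eq_of_notMem]
  intro hh
  exact C.dppr (congrArg Prod.fst (Finset.mem_singleton.mp hh)).symm

lemma outSr_p : C.Sr.edges.filter (fun e => e.1 = C.p) = {(C.p, C.pc)} := by
  show ((insert (C.q, C.c) C.Fr).filter (fun e => e.1 = C.p)) = _
  rw [Finset.filter_insert, if_neg (by exact C.dqp),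
    C.filter_out_Fr C.dpr, C.outP, Finset.erase_insert]
  intro hh
  exact C.dpcr (congrArg Prod.snd (Finset.mem_singleton.mp hh)).symm

lemma D_filter_p :
    C.D.edges.filter (fun e => e.1 ≠ C.p ∧ e.2 ≠ C.p) = C.Fp := by
  ext ⟨e1, e2⟩
  show (e1, e2) ∈ (C.N.edges.erase (C.p, C.r)).filter _ ↔ _
  simp only [Ctx.Fp, Finset.mem_filter, Finset.mem_erase, Prod.mk.injEq, ne_eq]
  constructor
  · rintro ⟨⟨_, h1⟩, h2, h3⟩
    exact ⟨h1, h2, h3⟩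
  · rintro ⟨h1, h2, h3⟩
    exact ⟨⟨fun hh => h2 hh.1, h1⟩, h2, h3⟩

lemma D_filter_r :
    C.D.edges.filter (fun e => e.1 ≠ C.r ∧ e.2 ≠ C.r) = C.Fr := by
  ext ⟨e1, e2⟩
  show (e1, e2) ∈ (C.N.edges.erase (C.p, C.r)).filter _ ↔ _
  simp only [Ctx.Fr, Finset.mem_filter, Finset.mem_erase, Prod.mk.injEq, ne_eq]
  constructor
  · rintro ⟨⟨_, h1⟩, h2, h3⟩
    exact ⟨h1, h2, h3⟩
  · rintro ⟨h1, h2, h3⟩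
    exact ⟨⟨fun hh => h3 hh.2, h1⟩, h2, h3⟩

lemma Sp_filter_r :
    C.Sp.edges.filter (fun e => e.1 ≠ C.r ∧ e.2 ≠ C.r) = insert (C.pp, C.pc) C.Fpr := by
  show ((insert (C.pp, C.pc) C.Fp).filter _) = _
  rw [Finset.filter_insert, if_pos (⟨C.dppr, C.dpcr⟩ : C.pp ≠ C.r ∧ C.pc ≠ C.r)]
  congr 1
  ext ⟨e1, e2⟩
  simp only [Ctx.Fp, Ctx.Fpr, Finset.mem_filter, ne_eq]
  tauto

lemma Sr_filter_p :
    C.Sr.edges.filter (fun e => e.1 ≠ C.p ∧ e.2 ≠ C.p) = insert (C.q, C.c) C.Fpr := by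
  show ((insert (C.q, C.c) C.Fr).filter _) = _
  rw [Finset.filter_insert, if_pos (⟨C.dqp, C.dcp⟩ : C.q ≠ C.p ∧ C.c ≠ C.p)]
  congr 1
  ext ⟨e1, e2⟩
  simp only [Ctx.Fr, Ctx.Fpr, Finset.mem_filter, ne_eq]
  tauto

/-! ### impossibility of degrees in `N` -/

lemma no_outdeg0 {v : ℕ} (hv : v ∈ C.N.verts) (h0 : C.N.outdeg v = 0)
    (hlab : C.N.lab v = none) : False := by
  rcases C.htype v hv with h | h | h | h
  · have := h.2.2; omega
  · obtain ⟨x, hx⟩ := (C.hlabiff v).mpr h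
    rw [hx] at hlab
    exact Option.some_ne_none x hlab
  · have := h.2.2; omega
  · have := h.2.2; omega

lemma no_11 {v : ℕ} (hv : v ∈ C.N.verts) (h1 : C.N.indeg v = 1)
    (h2 : C.N.outdeg v = 1) : False := by
  rcases C.htype v hv with h | h | h | h
  · have := h.2.1; omega
  · have := h.2.2; omega
  · have := h.2.2; omega
  · have := h.2.1; omega

/-! ### the four clean-up steps -/

lemma stepDSp : Net.CleanStep C.D C.Sp := by
  have h := Net.CleanStep.suppress C.D C.pp C.p C.pc
    (by rw [C.indeg_D, if_neg C.dpr]; exact C.indegN_p)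
    (by rw [C.outdeg_D, if_pos rfl])
    (Finset.mem_erase.mpr ⟨fun hh => C.dpr (congrArg Prod.snd hh), C.hppE⟩)
    (Finset.mem_erase.mpr ⟨fun hh => C.dpcr (congrArg Prod.snd hh), C.hpcE⟩)
  rw [C.D_filter_p] at h
  exact h

lemma stepDSr : Net.CleanStep C.D C.Sr := by
  have h := Net.CleanStep.suppress C.D C.q C.r C.c
    (by rw [C.indeg_D, if_pos rfl])
    (by rw [C.outdeg_D, if_neg (fun hh => C.dpr hh.symm)]; exact C.outdegN_r)
    (Finset.mem_erase.mpr ⟨fun hh => C.dqp (congrArg Prod.fst hh), C.hqrE⟩)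
    (Finset.mem_erase.mpr ⟨fun hh => C.dpr (congrArg Prod.fst hh).symm, C.hrcE⟩)
  rw [C.D_filter_r] at h
  exact h

lemma stepSpMf : Net.CleanStep C.Sp C.Mf := by
  have h := Net.CleanStep.suppress C.Sp C.q C.r C.c
    (by rw [C.indeg_Sp, if_neg (fun hh => C.dpr hh.symm), if_pos rfl])
    (by rw [C.outdeg_Sp, if_neg (fun hh => C.dpr hh.symm)]; exact C.outdegN_r)
    (Finset.mem_insert_of_mem (Finset.mem_filter.mpr
      ⟨C.hqrE, C.dqp, fun hh => C.dpr hh.symm⟩))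
    (Finset.mem_insert_of_mem (Finset.mem_filter.mpr
      ⟨C.hrcE, fun hh => C.dpr hh.symm, C.dcp⟩))
  rw [C.Sp_filter_r] at h
  exact h

lemma stepSrMf : Net.CleanStep C.Sr C.Mf := by
  have h := Net.CleanStep.suppress C.Sr C.pp C.p C.pc
    (by rw [C.indeg_Sr, if_neg C.dpr]; exact C.indegN_p)
    (by rw [C.outdeg_Sr, if_neg C.dpr, if_pos rfl])
    (Finset.mem_insert_of_mem (Finset.mem_filter.mpr ⟨C.hppE, C.dppr, C.dpr⟩))
    (Finset.mem_insert_of_mem (Finset.mem_filter.mpr ⟨C.hpcE, C.dpr, C.dpcr⟩))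
  rw [C.Sr_filter_p, Finset.insert_comm] at h
  rw [show C.Sr.verts = C.N.verts.erase C.r from rfl, Finset.erase_right_comm] at h
  exact h

/-! ### characterizations of all possible clean-up steps -/

lemma stepD_char {G : Net X} (h : Net.CleanStep C.D G) : G = C.Sp ∨ G = C.Sr := by
  cases h with
  | delNode v hv h0 hlab =>
    exfalso
    rw [C.outdeg_D] at h0
    by_cases hvp : v = C.p
    · rw [if_pos hvp] at h0; omega
    · rw [if_neg hvp] at h0
      exact C.no_outdeg0 hv h0 hlab
  | suppress u v w h1 h2 hu hw =>
    rw [C.indeg_D] at h1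
    rw [C.outdeg_D] at h2
    by_cases hvp : v = C.p
    · subst hvp
      left
      have hu' : (u, C.p) ∈ C.D.edges.filter (fun e => e.2 = C.p) :=
        Finset.mem_filter.mpr ⟨hu, rfl⟩
      rw [C.inD_p, Finset.mem_singleton] at hu'
      have hw' : (C.p, w) ∈ C.D.edges.filter (fun e => e.1 = C.p) :=
        Finset.mem_filter.mpr ⟨hw, rfl⟩
      rw [C.outD_p, Finset.mem_singleton] at hw'
      have hu2 : u = C.pp := congrArg Prod.fst hu'
      have hw2 : w = C.pc := congrArg Prod.snd hw'
      subst hu2; subst hw2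
      rw [C.D_filter_p]
      rfl
    · by_cases hvr : v = C.r
      · subst hvr
        right
        have hu' : (u, C.r) ∈ C.D.edges.filter (fun e => e.2 = C.r) :=
          Finset.mem_filter.mpr ⟨hu, rfl⟩
        rw [C.inD_r, Finset.mem_singleton] at hu'
        have hw' : (C.r, w) ∈ C.D.edges.filter (fun e => e.1 = C.r) :=
          Finset.mem_filter.mpr ⟨hw, rfl⟩
        rw [C.outD_r, Finset.mem_singleton] at hw'
        have hu2 : u = C.q := congrArg Prod.fst hu'
        have hw2 : w = C.c := congrArg Prod.snd hw'
        subst hu2; subst hw2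
        rw [C.D_filter_r]
        rfl
      · exfalso
        rw [if_neg hvr] at h1
        rw [if_neg hvp] at h2
        exact C.no_11 (C.hend _ (Finset.mem_of_mem_erase hu)).2 h1 h2

lemma stepSp_char {G : Net X} (h : Net.CleanStep C.Sp G) : G = C.Mf := by
  cases h with
  | delNode v hv h0 hlab =>
    exfalso
    have hv' : v ∈ C.N.verts.erase C.p := hv
    rw [C.outdeg_Sp, if_neg (Finset.mem_erase.mp hv').1] at h0
    exact C.no_outdeg0 (Finset.mem_of_mem_erase hv') h0 hlab
  | suppress u v w h1 h2 hu hw =>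
    rw [C.indeg_Sp] at h1
    rw [C.outdeg_Sp] at h2
    by_cases hvp : v = C.p
    · exfalso; rw [if_pos hvp] at h2; omega
    · by_cases hvr : v = C.r
      · subst hvr
        have hu' : (u, C.r) ∈ C.Sp.edges.filter (fun e => e.2 = C.r) :=
          Finset.mem_filter.mpr ⟨hu, rfl⟩
        rw [C.inSp_r, Finset.mem_singleton] at hu'
        have hw' : (C.r, w) ∈ C.Sp.edges.filter (fun e => e.1 = C.r) :=
          Finset.mem_filter.mpr ⟨hw, rfl⟩
        rw [C.outSp_r, Finset.mem_singleton] at hw'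
        have hu2 : u = C.q := congrArg Prod.fst hu'
        have hw2 : w = C.c := congrArg Prod.snd hw'
        subst hu2; subst hw2
        rw [C.Sp_filter_r]
        rfl
      · exfalso
        rw [if_neg hvp, if_neg hvr] at h1
        rw [if_neg hvp] at h2
        have hvmem : v ∈ C.N.verts := by
          rcases Finset.mem_insert.mp hu with hh | hh
          · have : v = C.pc := congrArg Prod.snd hh
            rw [this]
            exact (C.hend _ C.hpcE).2
          · exact (C.hend _ (Finset.mem_filter.mp hh).1).2
        exact C.no_11 hvmem h1 h2

lemma stepSr_char {G : Net X} (h : Net.CleanStep C.Sr G) : G = C.Mf := by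
  cases h with
  | delNode v hv h0 hlab =>
    exfalso
    have hv' : v ∈ C.N.verts.erase C.r := hv
    rw [C.outdeg_Sr, if_neg (Finset.mem_erase.mp hv').1] at h0
    by_cases hvp : v = C.p
    · rw [if_pos hvp] at h0; omega
    · rw [if_neg hvp] at h0
      exact C.no_outdeg0 (Finset.mem_of_mem_erase hv') h0 hlab
  | suppress u v w h1 h2 hu hw =>
    rw [C.indeg_Sr] at h1
    rw [C.outdeg_Sr] at h2
    by_cases hvr : v = C.r
    · exfalso; rw [if_pos hvr] at h2; omega
    · by_cases hvp : v = C.p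
      · subst hvp
        have hu' : (u, C.p) ∈ C.Sr.edges.filter (fun e => e.2 = C.p) :=
          Finset.mem_filter.mpr ⟨hu, rfl⟩
        rw [C.inSr_p, Finset.mem_singleton] at hu'
        have hw' : (C.p, w) ∈ C.Sr.edges.filter (fun e => e.1 = C.p) :=
          Finset.mem_filter.mpr ⟨hw, rfl⟩
        rw [C.outSr_p, Finset.mem_singleton] at hw'
        have hu2 : u = C.pp := congrArg Prod.fst hu'
        have hw2 : w = C.pc := congrArg Prod.snd hw'
        subst hu2; subst hw2
        rw [C.Sr_filter_p, Finset.insert_comm]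
        rw [show C.Sr.verts = C.N.verts.erase C.r from rfl, Finset.erase_right_comm]
        rfl
      · exfalso
        rw [if_neg hvr] at h1
        rw [if_neg hvr, if_neg hvp] at h2
        have hvmem : v ∈ C.N.verts := by
          rcases Finset.mem_insert.mp hu with hh | hh
          · have : v = C.c := congrArg Prod.snd hh
            rw [this]
            exact (C.hend _ C.hrcE).2
          · exact (C.hend _ (Finset.mem_filter.mp hh).1).2
        exact C.no_11 hvmem h1 h2

lemma stepMf_none (G : Net X) : ¬ Net.CleanStep C.Mf G := by
  intro h
  cases h with
  | delNode v hv h0 hlab =>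
    have hv' : v ∈ (C.N.verts.erase C.p).erase C.r := hv
    obtain ⟨hvr, hv2⟩ := Finset.mem_erase.mp hv'
    obtain ⟨hvp, hv3⟩ := Finset.mem_erase.mp hv2
    rw [C.outdeg_Mf, if_neg (by tauto)] at h0
    exact C.no_outdeg0 hv3 h0 hlab
  | suppress u v w h1 h2 hu hw =>
    rw [C.indeg_Mf] at h1
    rw [C.outdeg_Mf] at h2
    by_cases hvpr : v = C.p ∨ v = C.r
    · rw [if_pos hvpr] at h1; omega
    · rw [if_neg hvpr] at h1
      rw [if_neg hvpr] at h2
      have hvmem : v ∈ C.N.verts := by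
        rcases Finset.mem_insert.mp hu with hh | hh
        · have : v = C.c := congrArg Prod.snd hh
          rw [this]
          exact (C.hend _ C.hrcE).2
        · rcases Finset.mem_insert.mp hh with hh2 | hh2
          · have : v = C.pc := congrArg Prod.snd hh2
            rw [this]
            exact (C.hend _ C.hpcE).2
          · exact (C.hend _ (Finset.mem_filter.mp hh2).1).2
      exact C.no_11 hvmem h1 h2

lemma cleans_to_Mf {M : Net X} (h : Relation.ReflTransGen Net.CleanStep C.D M)
    (hterm : ∀ M', ¬ Net.CleanStep M M') : M = C.Mf := by
  suffices H : ∀ G, Relation.ReflTransGen Net.CleanStep G M →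
      (G = C.D ∨ G = C.Sp ∨ G = C.Sr ∨ G = C.Mf) → M = C.Mf by
    exact H _ h (Or.inl rfl)
  intro G hG
  induction hG using Relation.ReflTransGen.head_induction_on with
  | refl =>
    rintro (rfl | rfl | rfl | rfl)
    · exact absurd C.stepDSp (hterm _)
    · exact absurd C.stepSpMf (hterm _)
    · exact absurd C.stepSrMf (hterm _)
    · rfl
  | head hstep hrest ih =>
    rintro (rfl | rfl | rfl | rfl)
    · rcases C.stepD_char hstep with h' | h'
      · exact ih (Or.inr (Or.inl h'))
      · exact ih (Or.inr (Or.inr (Or.inl h')))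
    · exact ih (Or.inr (Or.inr (Or.inr (C.stepSp_char hstep))))
    · exact ih (Or.inr (Or.inr (Or.inr (C.stepSr_char hstep))))
    · exact absurd hstep (C.stepMf_none _)

/-! ### the final network is tree-child -/

lemma mem_Mf {v : ℕ} (hv : v ∈ C.N.verts) (hvp : v ≠ C.p) (hvr : v ≠ C.r) :
    v ∈ C.Mf.verts :=
  Finset.mem_erase.mpr ⟨hvr, Finset.mem_erase.mpr ⟨hvp, hv⟩⟩

lemma mem_Mf_elim {v : ℕ} (hv : v ∈ C.Mf.verts) :
    v ∈ C.N.verts ∧ v ≠ C.p ∧ v ≠ C.r := by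
  have hv' : v ∈ (C.N.verts.erase C.p).erase C.r := hv
  obtain ⟨h1, h2⟩ := Finset.mem_erase.mp hv'
  obtain ⟨h3, h4⟩ := Finset.mem_erase.mp h2
  exact ⟨h4, h3, h1⟩

lemma mf_edge_reach {a b : ℕ} (h : C.Mf.Edge a b) :
    ∃ x, C.N.Edge a x ∧ C.N.Reaches x b := by
  rcases Finset.mem_insert.mp h with hh | hh
  · have ha : a = C.q := congrArg Prod.fst hh
    have hb : b = C.c := congrArg Prod.snd hh
    subst ha; subst hb
    exact ⟨C.r, C.hqrE, Relation.ReflTransGen.single C.hrcE⟩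
  · rcases Finset.mem_insert.mp hh with hh2 | hh2
    · have ha : a = C.pp := congrArg Prod.fst hh2
      have hb : b = C.pc := congrArg Prod.snd hh2
      subst ha; subst hb
      exact ⟨C.p, C.hppE, Relation.ReflTransGen.single C.hpcE⟩
    · exact ⟨b, (Finset.mem_filter.mp hh2).1, Relation.ReflTransGen.refl⟩

lemma mf_reach {a b : ℕ} (h : C.Mf.Reaches a b) : C.N.Reaches a b := by
  induction h with
  | refl => exact Relation.ReflTransGen.refl
  | tail h1 h2 ih =>
    obtain ⟨x, hx, hr⟩ := C.mf_edge_reach h2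
    exact ih.trans ((Relation.ReflTransGen.single hx).trans hr)

lemma leaf_ne_p {v : ℕ} (h : C.N.IsLeaf v) : v ≠ C.p := by
  intro hh
  rw [hh] at h
  have h1 := h.2.2
  have h2 := C.outdegN_p
  omega

lemma leaf_ne_r {v : ℕ} (h : C.N.IsLeaf v) : v ≠ C.r := by
  intro hh
  rw [hh] at h
  have h1 := h.2.1
  have h2 := C.indegN_r
  omega

lemma leaf_transfer {v : ℕ} (h : C.N.IsLeaf v) : C.Mf.IsLeaf v := by
  have hvp := C.leaf_ne_p h
  have hvr := C.leaf_ne_r h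
  refine ⟨C.mem_Mf h.1 hvp hvr, ?_, ?_⟩
  · rw [C.indeg_Mf, if_neg (by tauto)]; exact h.2.1
  · rw [C.outdeg_Mf, if_neg (by tauto)]; exact h.2.2

lemma tree_transfer {v : ℕ} (h : C.N.IsTreeNode v) (hvp : v ≠ C.p) (hvr : v ≠ C.r) :
    C.Mf.IsTreeNode v := by
  refine ⟨C.mem_Mf h.1 hvp hvr, ?_, ?_⟩
  · rw [C.indeg_Mf, if_neg (by tauto)]; exact h.2.1
  · rw [C.outdeg_Mf, if_neg (by tauto)]; exact h.2.2

lemma mf_treeChild : C.Mf.TreeChild := by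
  constructor
  · refine ⟨?_, ?_, ?_, ?_, ?_, ?_⟩
    · -- endpoints
      intro e he
      rcases Finset.mem_insert.mp he with hh | hh
      · rw [hh]
        exact ⟨C.mem_Mf (C.hend _ C.hqrE).1 C.dqp C.dqr,
          C.mem_Mf (C.hend _ C.hrcE).2 C.dcp C.dcr⟩
      · rcases Finset.mem_insert.mp hh with hh2 | hh2
        · rw [hh2]
          exact ⟨C.mem_Mf (C.hend _ C.hppE).1 C.dppp C.dppr,
            C.mem_Mf (C.hend _ C.hpcE).2 C.dpcp C.dpcr⟩
        · obtain ⟨heE, ⟨ha1, ha2⟩, ha3, ha4⟩ := Finset.mem_filter.mp hh2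
          exact ⟨C.mem_Mf (C.hend _ heE).1 ha1 ha3,
            C.mem_Mf (C.hend _ heE).2 ha2 ha4⟩
    · -- acyclicity
      intro u v huv hr
      obtain ⟨x, hx, hxr⟩ := C.mf_edge_reach huv
      exact C.hacyc u x hx (hxr.trans (C.mf_reach hr))
    · -- unique root
      obtain ⟨ρ, hρ, hρu⟩ := C.hroot
      have hρp : ρ ≠ C.p := by
        intro hh
        rw [hh] at hρ
        have h1 := hρ.2.1
        have h2 := C.indegN_p
        omega
      have hρr : ρ ≠ C.r := by
        intro hh
        rw [hh] at hρ
        have h1 := hρ.2.1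
        have h2 := C.indegN_r
        omega
      refine ⟨ρ, ⟨C.mem_Mf hρ.1 hρp hρr, ?_, ?_⟩, ?_⟩
      · rw [C.indeg_Mf, if_neg (by tauto)]; exact hρ.2.1
      · rw [C.outdeg_Mf, if_neg (by tauto)]; exact hρ.2.2
      · rintro v ⟨hvm, hvi, hvo⟩
        obtain ⟨hv3, hvp, hvr⟩ := C.mem_Mf_elim hvm
        rw [C.indeg_Mf, if_neg (by tauto)] at hvi
        rw [C.outdeg_Mf, if_neg (by tauto)] at hvo
        exact hρu v ⟨hv3, hvi, hvo⟩
    · -- node types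
      intro v hv
      obtain ⟨hv3, hvp, hvr⟩ := C.mem_Mf_elim hv
      rcases C.htype v hv3 with h | h | h | h
      · left
        refine ⟨hv, ?_, ?_⟩
        · rw [C.indeg_Mf, if_neg (by tauto)]; exact h.2.1
        · rw [C.outdeg_Mf, if_neg (by tauto)]; exact h.2.2
      · right; left; exact C.leaf_transfer h
      · right; right; left; exact C.tree_transfer h hvp hvr
      · right; right; right
        refine ⟨hv, ?_, ?_⟩
        · rw [C.indeg_Mf, if_neg (by tauto)]; exact h.2.1
        · rw [C.outdeg_Mf, if_neg (by tauto)]; exact h.2.2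
    · -- labels iff leaves
      intro v
      constructor
      · intro hx
        exact C.leaf_transfer ((C.hlabiff v).mp hx)
      · intro hleaf
        apply (C.hlabiff v).mpr
        obtain ⟨hv3, hvp, hvr⟩ := C.mem_Mf_elim hleaf.1
        have hvi := hleaf.2.1
        have hvo := hleaf.2.2
        rw [C.indeg_Mf, if_neg (by tauto)] at hvi
        rw [C.outdeg_Mf, if_neg (by tauto)] at hvo
        exact ⟨hv3, hvi, hvo⟩
    · -- unique labels
      exact C.hlabuniq
  · -- tree-child property
    intro v hv hnl
    obtain ⟨hv3, hvp, hvr⟩ := C.mem_Mf_elim hv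
    have hnlN : ¬ C.N.IsLeaf v := fun hl => hnl (C.leaf_transfer hl)
    obtain ⟨ch, hch, hchT⟩ := C.htc v hv3 hnlN
    by_cases hchp : ch = C.p
    · -- then v = pp; use pc instead
      rw [hchp] at hch
      have hvpp : v = C.pp := C.edge_to_p.mp hch
      refine ⟨C.pc, ?_, ?_⟩
      · rw [hvpp]
        exact Finset.mem_insert_of_mem (Finset.mem_insert_self _ _)
      · rcases C.pcTL with ht | hl
        · exact Or.inl (C.tree_transfer ht C.dpcp C.dpcr)
        · exact Or.inr (C.leaf_transfer hl)
    · have hchr : ch ≠ C.r := by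
        intro hh
        rw [hh] at hchT
        rcases hchT with ht | hl
        · have h1 := ht.2.1
          have h2 := C.indegN_r
          omega
        · have h1 := hl.2.2
          have h2 := C.outdegN_r
          omega
      refine ⟨ch, ?_, ?_⟩
      · exact Finset.mem_insert_of_mem (Finset.mem_insert_of_mem
          (Finset.mem_filter.mpr ⟨hch, ⟨hvp, hchp⟩, hvr, hchr⟩))
      · rcases hchT with ht | hl
        · exact Or.inl (C.tree_transfer ht hchp hchr)
        · exact Or.inr (C.leaf_transfer hl)

end Ctx

lemma mkCtx (N : Net X) (hN : N.TreeChild) {p r : ℕ} (he : N.IsReticEdge (p, r)) :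
    ∃ C : Ctx X, C.N = N ∧ C.p = p ∧ C.r = r := by
  obtain ⟨hNnet, htc⟩ := hN
  obtain ⟨hend, hacyc, hroot, htype, hlabiff, hlabuniq⟩ := hNnet
  obtain ⟨hprE, hrret0⟩ := he
  have hrret : N.IsRetic r := hrret0
  have ne_of_edge : ∀ {a b : ℕ}, (a, b) ∈ N.edges → a ≠ b := by
    intro a b h hab
    exact hacyc a b h (hab ▸ Relation.ReflTransGen.refl)
  have no2 : ∀ {a b : ℕ}, (a, b) ∈ N.edges → (b, a) ∈ N.edges → False := by
    intro a b h1 h2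
    exact hacyc a b h1 (Relation.ReflTransGen.single h2)
  have no3 : ∀ {a b c : ℕ}, (a, b) ∈ N.edges → (b, c) ∈ N.edges →
      (c, a) ∈ N.edges → False := by
    intro a b c h1 h2 h3
    exact hacyc a b h1 ((Relation.ReflTransGen.single h2).trans
      (Relation.ReflTransGen.single h3))
  have parent_tree : ∀ {v : ℕ}, (v, r) ∈ N.edges → N.IsTreeNode v := by
    intro v hvr
    have hvmem := (hend _ hvr).1
    have hvpos : 1 ≤ N.outdeg v :=
      Finset.card_pos.mpr ⟨_, Finset.mem_filter.mpr ⟨hvr, rfl⟩⟩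
    have hout1 : N.outdeg v = 1 → False := by
      intro h1
      have hsing : N.edges.filter (fun e => e.1 = v) = {(v, r)} :=
        eq_singleton_of_card_one h1 (Finset.mem_filter.mpr ⟨hvr, rfl⟩)
      have hnl : ¬ N.IsLeaf v := by
        intro hl
        have := hl.2.2
        omega
      obtain ⟨ch, hch, hchT⟩ := htc v hvmem hnl
      have hmem : (v, ch) ∈ ({(v, r)} : Finset (ℕ × ℕ)) :=
        hsing ▸ Finset.mem_filter.mpr ⟨hch, rfl⟩
      have hcr : ch = r := congrArg Prod.snd (Finset.mem_singleton.mp hmem)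
      subst hcr
      rcases hchT with ht | hl
      · have h2 := ht.2.1
        have h3 := hrret.2.1
        omega
      · have h2 := hl.2.1
        have h3 := hrret.2.1
        omega
    rcases htype v hvmem with h | h | h | h
    · exact absurd h.2.2 (fun hh => hout1 hh)
    · exfalso
      have := h.2.2
      omega
    · exact h
    · exact absurd h.2.2 (fun hh => hout1 hh)
  have treeP := parent_tree hprE
  -- extract pp
  obtain ⟨a, ha⟩ := Finset.card_eq_one.mp (treeP.2.1 :
    (N.edges.filter (fun e => e.2 = p)).card = 1)
  have haf : a ∈ N.edges.filter (fun e => e.2 = p) := ha ▸ Finset.mem_singleton_self a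
  obtain ⟨haE, ha2⟩ := Finset.mem_filter.mp haf
  have inP : N.edges.filter (fun e => e.2 = p) = {(a.1, p)} := by
    rw [ha]
    congr 1
    rw [← ha2]
  have hppE : (a.1, p) ∈ N.edges := by
    have : (a.1, p) = a := by rw [← ha2]
    rw [this]; exact haE
  -- extract pc
  have hprf : (p, r) ∈ N.edges.filter (fun e => e.1 = p) :=
    Finset.mem_filter.mpr ⟨hprE, rfl⟩
  have h1 : ((N.edges.filter (fun e => e.1 = p)).erase (p, r)).card = 1 := by
    have h3 : (N.edges.filter (fun e => e.1 = p)).card = 2 := treeP.2.2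
    rw [Finset.card_erase_of_mem hprf, h3]
  obtain ⟨b, hb⟩ := Finset.card_eq_one.mp h1
  have hbf : b ∈ (N.edges.filter (fun e => e.1 = p)).erase (p, r) :=
    hb ▸ Finset.mem_singleton_self b
  obtain ⟨hbne, hbf2⟩ := Finset.mem_erase.mp hbf
  obtain ⟨hbE, hb1⟩ := Finset.mem_filter.mp hbf2
  have hbpair : (p, b.2) = b := by rw [← hb1]
  have outP : N.edges.filter (fun e => e.1 = p) = {(p, r), (p, b.2)} := by
    rw [← Finset.insert_erase hprf, hb, hbpair]
  have hpcE : (p, b.2) ∈ N.edges := by rw [hbpair]; exact hbE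
  have dpcr : b.2 ≠ r := by
    intro hh
    apply hbne
    rw [← hbpair, hh]
  -- extract q
  have hprf2 : (p, r) ∈ N.edges.filter (fun e => e.2 = r) :=
    Finset.mem_filter.mpr ⟨hprE, rfl⟩
  have h2 : ((N.edges.filter (fun e => e.2 = r)).erase (p, r)).card = 1 := by
    have h3 : (N.edges.filter (fun e => e.2 = r)).card = 2 := hrret.2.1
    rw [Finset.card_erase_of_mem hprf2, h3]
  obtain ⟨d, hd⟩ := Finset.card_eq_one.mp h2
  have hdf : d ∈ (N.edges.filter (fun e => e.2 = r)).erase (p, r) :=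
    hd ▸ Finset.mem_singleton_self d
  obtain ⟨hdne, hdf2⟩ := Finset.mem_erase.mp hdf
  obtain ⟨hdE, hd2⟩ := Finset.mem_filter.mp hdf2
  have hdpair : (d.1, r) = d := by rw [← hd2]
  have inR : N.edges.filter (fun e => e.2 = r) = {(p, r), (d.1, r)} := by
    rw [← Finset.insert_erase hprf2, hd, hdpair]
  have hqrE : (d.1, r) ∈ N.edges := by rw [hdpair]; exact hdE
  have dqp : d.1 ≠ p := by
    intro hh
    apply hdne
    rw [← hdpair, hh]
  -- extract c
  obtain ⟨f, hf⟩ := Finset.card_eq_one.mp (hrret.2.2 :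
    (N.edges.filter (fun e => e.1 = r)).card = 1)
  have hff : f ∈ N.edges.filter (fun e => e.1 = r) := hf ▸ Finset.mem_singleton_self f
  obtain ⟨hfE, hf1⟩ := Finset.mem_filter.mp hff
  have hfpair : (r, f.2) = f := by rw [← hf1]
  have outR : N.edges.filter (fun e => e.1 = r) = {(r, f.2)} := by rw [hf, hfpair]
  have hrcE : (r, f.2) ∈ N.edges := by rw [hfpair]; exact hfE
  -- children of p and r are tree nodes or leaves
  have retic_not_TL : ¬ (N.IsTreeNode r ∨ N.IsLeaf r) := by
    rintro (ht | hl)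
    · have := ht.2.1
      have := hrret.2.1
      omega
    · have := hl.2.2
      have := hrret.2.2
      omega
  have pcTL : N.IsTreeNode b.2 ∨ N.IsLeaf b.2 := by
    have hnl : ¬ N.IsLeaf p := by
      intro hl
      have := hl.2.2
      have := treeP.2.2
      omega
    obtain ⟨ch, hch, hchT⟩ := htc p treeP.1 hnl
    have : (p, ch) ∈ N.edges.filter (fun e => e.1 = p) := Finset.mem_filter.mpr ⟨hch, rfl⟩
    rw [outP, Finset.mem_insert, Finset.mem_singleton] at this
    rcases this with hh | hh
    · exfalso
      have : ch = r := congrArg Prod.snd hh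
      rw [this] at hchT
      exact retic_not_TL hchT
    · have : ch = b.2 := congrArg Prod.snd hh
      rw [← this]
      exact hchT
  have cTL : N.IsTreeNode f.2 ∨ N.IsLeaf f.2 := by
    have hnl : ¬ N.IsLeaf r := by
      intro hl
      have := hl.2.2
      have := hrret.2.2
      omega
    obtain ⟨ch, hch, hchT⟩ := htc r hrret.1 hnl
    have : (r, ch) ∈ N.edges.filter (fun e => e.1 = r) := Finset.mem_filter.mpr ⟨hch, rfl⟩
    rw [outR, Finset.mem_singleton] at this
    have hc : ch = f.2 := congrArg Prod.snd this
    rw [← hc]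
    exact hchT
  -- in-degree-1 characterizations for pc and c
  have indeg_pc : (N.edges.filter (fun e => e.2 = b.2)).card = 1 := by
    rcases pcTL with ht | hl
    · exact ht.2.1
    · exact hl.2.1
  have inPC : N.edges.filter (fun e => e.2 = b.2) = {(p, b.2)} :=
    eq_singleton_of_card_one indeg_pc (Finset.mem_filter.mpr ⟨hpcE, rfl⟩)
  have indeg_c : (N.edges.filter (fun e => e.2 = f.2)).card = 1 := by
    rcases cTL with ht | hl
    · exact ht.2.1
    · exact hl.2.1
  have inC : N.edges.filter (fun e => e.2 = f.2) = {(r, f.2)} :=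
    eq_singleton_of_card_one indeg_c (Finset.mem_filter.mpr ⟨hrcE, rfl⟩)
  -- distinctness
  have dpr : p ≠ r := ne_of_edge hprE
  have dppp : a.1 ≠ p := ne_of_edge hppE
  have dppr : a.1 ≠ r := by
    intro hh
    rw [hh] at hppE
    exact no2 hprE hppE
  have dpcp : b.2 ≠ p := (ne_of_edge hpcE).symm
  have dqr : d.1 ≠ r := ne_of_edge hqrE
  have dcp : f.2 ≠ p := by
    intro hh
    rw [hh] at hrcE
    exact no2 hprE hrcE
  have dcr : f.2 ≠ r := (ne_of_edge hrcE).symm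
  have dpcc : b.2 ≠ f.2 := by
    intro hh
    have hm : (r, b.2) ∈ N.edges.filter (fun e => e.2 = b.2) := by
      refine Finset.mem_filter.mpr ⟨?_, rfl⟩
      rw [hh]
      exact hrcE
    rw [inPC, Finset.mem_singleton] at hm
    exact dpr (congrArg Prod.fst hm).symm
  have dppc : a.1 ≠ f.2 := by
    intro hh
    rw [hh] at hppE
    exact no3 hprE hrcE hppE
  have dpppc : a.1 ≠ b.2 := by
    intro hh
    rw [hh] at hppE
    have hm : (b.2, p) ∈ N.edges.filter (fun e => e.2 = p) :=
      Finset.mem_filter.mpr ⟨hppE, rfl⟩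
    exact no2 hpcE hppE
  have dqc : d.1 ≠ f.2 := by
    intro hh
    rw [hh] at hqrE
    exact no2 hqrE hrcE
  have hppc : (a.1, b.2) ∉ N.edges := by
    intro hh
    have hm : (a.1, b.2) ∈ N.edges.filter (fun e => e.2 = b.2) :=
      Finset.mem_filter.mpr ⟨hh, rfl⟩
    rw [inPC, Finset.mem_singleton] at hm
    exact dppp (congrArg Prod.fst hm)
  have hqc : (d.1, f.2) ∉ N.edges := by
    intro hh
    have hm : (d.1, f.2) ∈ N.edges.filter (fun e => e.2 = f.2) :=
      Finset.mem_filter.mpr ⟨hh, rfl⟩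
    rw [inC, Finset.mem_singleton] at hm
    exact dqr (congrArg Prod.fst hm)
  have hqout2 : 2 ≤ N.outdeg d.1 := le_of_eq (parent_tree hqrE).2.2.symm
  exact ⟨⟨N, p, r, a.1, b.2, d.1, f.2, hend, hacyc, hroot, htype, hlabiff, hlabuniq,
    htc, inP, outP, inR, outR, treeP, hrret, pcTL, cTL, dpr, dppp, dppr, dpcp, dpcr,
    dqp, dqr, dcp, dcr, dpcc, dppc, dpppc, dqc, hppc, hqc, hqout2⟩, rfl, rfl, rfl⟩

end MaxSubnetTC

/-- Every maximum subnetwork of a binary tree-child network is tree-child. -/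
theorem maxSubnet_treeChild {X : Type} (N M : Net X) (hN : N.TreeChild)
    (h : N.IsMaxSubnet M) : M.TreeChild := by
  obtain ⟨e, he, hclean⟩ := h
  obtain ⟨p, r⟩ := e
  obtain ⟨C, hCN, hCp, hCr⟩ := MaxSubnetTC.mkCtx N hN he
  obtain ⟨hchain, hterm⟩ := hclean
  subst hCN; subst hCp; subst hCr
  have hM : M = C.Mf := C.cleans_to_Mf hchain hterm
  rw [hM]
  exact C.mf_treeChild
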